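/- The number of regions determined by an arrangement of n hyperplanes through the origin in ℝ^r (equivalently, the number of distinct vectors sign(Xu) ∈ {−1,+1}^n over u ∈ ℝ^r with Xu having no zero entries, for X ∈ ℝ^{n×r}) is at most 2 Σ_{k=0}^{r−1} C(n−1, k). -/

import Mathlib

open Matrix Finset

/-- The set of sign patterns of a family of linear functionals. -/
def patt {n : ℕ} {V : Type} [AddCommGroup V] [Module ℝ V] (S : Fin n → V →ₗ[ℝ] ℝ) :
    Set (Fin n → ℝ) :=
  {s | ∃ u : V, (∀ i, S i u ≠ 0) ∧ s = fun i => Real.sign (S i u)}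

lemma patt_finite {n : ℕ} {V : Type} [AddCommGroup V] [Module ℝ V]
    (S : Fin n → V →ₗ[ℝ] ℝ) : (patt S).Finite := by
  apply Set.Finite.subset (Set.Finite.pi (fun _ : Fin n => ({-1, 0, 1} : Set ℝ).toFinite))
  rintro s ⟨u, hu, rfl⟩
  intro i _
  rcases Real.sign_apply_eq (S i u) with h | h | h <;> simp [h]

lemma sign_pos_iff {x : ℝ} : Real.sign x = 1 ↔ 0 < x := by
  constructor
  · intro h
    rcases lt_trichotomy x 0 with h' | h' | h'
    · rw [Real.sign_of_neg h'] at h; norm_num at h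
    · rw [h', Real.sign_zero] at h; norm_num at h
    · exact h'
  · exact Real.sign_of_pos

lemma sign_neg_iff {x : ℝ} : Real.sign x = -1 ↔ x < 0 := by
  constructor
  · intro h
    rcases lt_trichotomy x 0 with h' | h' | h'
    · exact h'
    · rw [h', Real.sign_zero] at h; norm_num at h
    · rw [Real.sign_of_pos h'] at h; norm_num at h
  · exact Real.sign_of_neg

/-- Convex combination of same-sign values keeps the sign. -/
lemma sign_convex {a b : ℝ} (ha : a ≠ 0) (hs : Real.sign a = Real.sign b)
    {t : ℝ} (ht0 : 0 ≤ t) (ht1 : t ≤ 1) :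
    Real.sign ((1 - t) * a + t * b) = Real.sign a := by
  rcases Real.sign_apply_eq_of_ne_zero a ha with h | h
  · have hb : b < 0 := sign_neg_iff.mp (hs ▸ h)
    have ha' : a < 0 := sign_neg_iff.mp h
    rw [h]
    apply Real.sign_of_neg
    have h1 : (1 - t) * a ≤ (1 - t) * max a b :=
      mul_le_mul_of_nonneg_left (le_max_left a b) (by linarith)
    have h2 : t * b ≤ t * max a b := mul_le_mul_of_nonneg_left (le_max_right a b) ht0
    have h3 : max a b < 0 := max_lt ha' hb
    nlinarith
  · have hb : 0 < b := sign_pos_iff.mp (hs ▸ h)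
    have ha' : 0 < a := sign_pos_iff.mp h
    rw [h]
    apply Real.sign_of_pos
    have h1 : (1 - t) * min a b ≤ (1 - t) * a :=
      mul_le_mul_of_nonneg_left (min_le_left a b) (by linarith)
    have h2 : t * min a b ≤ t * b := mul_le_mul_of_nonneg_left (min_le_right a b) ht0
    have h3 : 0 < min a b := lt_min ha' hb
    nlinarith

lemma patt_empty_of_subsingleton {n : ℕ} (hn : 1 ≤ n) {V : Type} [AddCommGroup V]
    [Module ℝ V] [Subsingleton V] (S : Fin n → V →ₗ[ℝ] ℝ) : patt S = ∅ := by
  ext s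
  simp only [patt, Set.mem_setOf_eq, Set.mem_empty_iff_false, iff_false]
  rintro ⟨u, hu, -⟩
  have : u = 0 := Subsingleton.elim _ _
  exact hu ⟨0, hn⟩ (by simp [this])

/-- Pascal-type identity for partial sums of binomial coefficients. -/
lemma sum_choose_succ (m d : ℕ) :
    ∑ k ∈ Finset.range (d+1), Nat.choose (m+1) k =
      ∑ k ∈ Finset.range (d+1), Nat.choose m k + ∑ k ∈ Finset.range d, Nat.choose m k := by
  induction d with
  | zero => simp
  | succ d ih =>
      rw [Finset.sum_range_succ, ih, Finset.sum_range_succ (n := d+1),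
        Finset.sum_range_succ (f := fun k => Nat.choose m k) (n := d)]
      have h : Nat.choose (m+1) (d+1) = Nat.choose m d + Nat.choose m (d+1) :=
        Nat.choose_succ_succ m d
      omega

/-- Main abstract lemma: Cover's bound for sign patterns of linear functionals. -/
lemma cover_main : ∀ (n : ℕ), 1 ≤ n → ∀ (d : ℕ) (V : Type) (_ : AddCommGroup V)
    (_ : Module ℝ V) (_ : FiniteDimensional ℝ V),
    Module.finrank ℝ V ≤ d → ∀ (S : Fin n → V →ₗ[ℝ] ℝ),
    (patt S).ncard ≤ 2 * ∑ k ∈ Finset.range d, Nat.choose (n - 1) k := by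
  intro n
  induction n with
  | zero => omega
  | succ n ih =>
    intro _ d V _ _ _ hd S
    rcases Nat.eq_zero_or_pos d with rfl | hd1
    · have h0 : Module.finrank ℝ V = 0 := Nat.le_zero.mp hd
      have : Subsingleton V := Module.finrank_zero_iff.mp h0
      rw [patt_empty_of_subsingleton (by omega)]
      simp
    rcases Nat.eq_zero_or_pos n with rfl | hn1
    · -- base case: one functional
      have hsub : patt S ⊆ {fun _ => 1, fun _ => -1} := by
        rintro s ⟨u, hu, rfl⟩
        rcases Real.sign_apply_eq_of_ne_zero (S 0 u) (hu 0) with h | h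
        · right
          funext i
          rw [Fin.fin_one_eq_zero i]
          exact h
        · left
          funext i
          rw [Fin.fin_one_eq_zero i]
          exact h
      have h2 : (patt S).ncard ≤ 2 := by
        refine le_trans (Set.ncard_le_ncard hsub (Set.toFinite _)) ?_
        refine le_trans (Set.ncard_insert_le _ _) ?_
        simp
      have h3 : 1 ≤ ∑ k ∈ Finset.range d, Nat.choose 0 k := by
        have := Finset.single_le_sum (f := fun k => Nat.choose 0 k)
          (fun i _ => Nat.zero_le _) (Finset.mem_range.mpr hd1)
        simpa using this
      simp only [Nat.add_sub_cancel] at *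
      omega
    -- main step
    obtain ⟨d', rfl⟩ : ∃ d', d = d' + 1 := ⟨d - 1, by omega⟩
    set L := S (Fin.last n) with hLdef
    by_cases hL : L = 0
    · have : patt S = ∅ := by
        ext s
        simp only [patt, Set.mem_setOf_eq, Set.mem_empty_iff_false, iff_false]
        rintro ⟨u, hu, -⟩
        exact hu (Fin.last n) (by rw [← hLdef, hL]; simp)
      rw [this]
      simp
    · -- the kernel of the last functional
      have hker : Module.finrank ℝ (LinearMap.ker L) ≤ d' := by
        have := Module.Dual.finrank_ker_add_one_of_ne_zero hL
        omega
      set W := LinearMap.ker L with hW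
      set S' : Fin n → V →ₗ[ℝ] ℝ := fun i => S i.castSucc with hS'
      set T : Fin n → (↥W) →ₗ[ℝ] ℝ := fun i => (S i.castSucc).comp W.subtype with hT
      set ρ : (Fin (n+1) → ℝ) → (Fin n → ℝ) := fun s => s ∘ Fin.castSucc with hρ
      set Pp : Set (Fin (n+1) → ℝ) := patt S ∩ {s | s (Fin.last n) = 1} with hPp
      set Pm : Set (Fin (n+1) → ℝ) := patt S ∩ {s | s (Fin.last n) = -1} with hPm
      have hsplit : patt S = Pp ∪ Pm := by
        ext s
        constructor
        · intro hs
          obtain ⟨u, hu, rfl⟩ := hs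
          rcases Real.sign_apply_eq_of_ne_zero (S (Fin.last n) u) (hu _) with h | h
          · exact Or.inr ⟨⟨u, hu, rfl⟩, h⟩
          · exact Or.inl ⟨⟨u, hu, rfl⟩, h⟩
        · rintro (⟨h, -⟩ | ⟨h, -⟩) <;> exact h
      have hinjp : Set.InjOn ρ Pp := by
        rintro s ⟨-, hs1⟩ s' ⟨-, hs1'⟩ h
        funext i
        refine Fin.lastCases ?_ (fun j => ?_) i
        · rw [hs1, hs1']
        · exact congrFun h j
      have hinjm : Set.InjOn ρ Pm := by
        rintro s ⟨-, hs1⟩ s' ⟨-, hs1'⟩ h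
        funext i
        refine Fin.lastCases ?_ (fun j => ?_) i
        · rw [hs1, hs1']
        · exact congrFun h j
      have himg : ∀ s ∈ patt S, ρ s ∈ patt S' := by
        rintro s ⟨u, hu, rfl⟩
        exact ⟨u, fun i => hu i.castSucc, rfl⟩
      have hAsub : ρ '' Pp ⊆ patt S' := by
        rintro x ⟨s, ⟨hs, -⟩, rfl⟩; exact himg s hs
      have hBsub : ρ '' Pm ⊆ patt S' := by
        rintro x ⟨s, ⟨hs, -⟩, rfl⟩; exact himg s hs
      -- the key geometric step: doubled patterns appear on the hyperplane
      have hABsub : (ρ '' Pp) ∩ (ρ '' Pm) ⊆ patt T := by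
        rintro x ⟨⟨sp, ⟨⟨u, hu, rfl⟩, hsp1⟩, rfl⟩, ⟨sm, ⟨⟨v, hv, hvm⟩, hsm1⟩, hx⟩⟩
        subst hvm
        have hau : 0 < L u := by
          rw [hLdef]
          exact sign_pos_iff.mp hsp1
        have hbv : L v < 0 := by
          rw [hLdef]
          exact sign_neg_iff.mp hsm1
        set a := L u with ha
        set b := L v with hb
        set t := a / (a - b) with htdef
        have hab : 0 < a - b := by linarith
        have ht0 : 0 ≤ t := div_nonneg hau.le hab.le
        have ht1 : t ≤ 1 := by
          rw [htdef, div_le_one hab]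
          linarith
        set w : V := (1 - t) • u + t • v with hwdef
        have hsame : ∀ i : Fin n, Real.sign (S i.castSucc u) = Real.sign (S i.castSucc v) := by
          intro i
          have h1 := congrFun hx i
          exact h1.symm
        have hexp : ∀ f : V →ₗ[ℝ] ℝ, f w = (1 - t) * f u + t * f v := by
          intro f
          simp [hwdef, smul_eq_mul]
        have hLw : L w = 0 := by
          rw [hexp L, ← ha, ← hb, htdef]
          field_simp
          ring
        have hsw : ∀ i : Fin n, Real.sign (S i.castSucc w) = Real.sign (S i.castSucc u) := by
          intro i
          rw [hexp _]
          exact sign_convex (hu i.castSucc) (hsame i) ht0 ht1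
        refine ⟨⟨w, hLw⟩, fun i => ?_, ?_⟩
        · intro h
          have h0 : S i.castSucc w = 0 := h
          have h1 : Real.sign (S i.castSucc u) = 0 := by
            rw [← hsw i, h0, Real.sign_zero]
          exact hu i.castSucc (Real.sign_eq_zero_iff.mp h1)
        · funext i
          show Real.sign (S i.castSucc u) = Real.sign (S i.castSucc w)
          exact (hsw i).symm
      -- counting
      have hfinPp : Pp.Finite := ((patt_finite S).subset (Set.inter_subset_left))
      have hfinPm : Pm.Finite := ((patt_finite S).subset (Set.inter_subset_left))
      have hcount : (patt S).ncard ≤ (patt S').ncard + (patt T).ncard := by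
        calc (patt S).ncard = (Pp ∪ Pm).ncard := by rw [hsplit]
          _ ≤ Pp.ncard + Pm.ncard := Set.ncard_union_le _ _
          _ = (ρ '' Pp).ncard + (ρ '' Pm).ncard := by
              rw [Set.ncard_image_of_injOn hinjp, Set.ncard_image_of_injOn hinjm]
          _ = ((ρ '' Pp) ∪ (ρ '' Pm)).ncard + ((ρ '' Pp) ∩ (ρ '' Pm)).ncard :=
              (Set.ncard_union_add_ncard_inter _ _ (hfinPp.image ρ) (hfinPm.image ρ)).symm
          _ ≤ (patt S').ncard + (patt T).ncard := by
              exact add_le_add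
                (Set.ncard_le_ncard (Set.union_subset hAsub hBsub) (patt_finite S'))
                (Set.ncard_le_ncard hABsub (patt_finite T))
      have ih1 := ih hn1 (d' + 1) V ‹_› ‹_› ‹_› hd S'
      have ih2 := ih hn1 d' (↥W) inferInstance inferInstance inferInstance hker T
      obtain ⟨m, rfl⟩ : ∃ m, n = m + 1 := ⟨n - 1, by omega⟩
      have hsum := sum_choose_succ (m := m) (d := d')
      simp only [Nat.add_sub_cancel] at *
      omega

theorem cover_winder_bound {n r : ℕ} (hr : 1 ≤ r) (hnr : r ≤ n)
    (X : Matrix (Fin n) (Fin r) ℝ) (hrow : ∀ i, X i ≠ 0) :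
    Set.ncard {s : Fin n → ℝ | ∃ u : Fin r → ℝ, (∀ i, (X.mulVec u) i ≠ 0) ∧
        s = fun i => Real.sign ((X.mulVec u) i)} ≤
      2 * ∑ k ∈ Finset.range r, Nat.choose (n - 1) k := by
  have := cover_main n (le_trans hr hnr) r (Fin r → ℝ) inferInstance inferInstance
    inferInstance (by simp [Module.finrank_pi]) (fun i => (LinearMap.proj i).comp X.mulVecLin)
  exact this
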